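/- If f is γ-quasar-convex with respect to a minimizer x*, then the set of all minimizers of f is star-convex with star center x*; i.e., if y also minimizes f, then tx* + (1−t)y minimizes f for all t ∈ [0,1]. -/

import Mathlib

open RealInnerProductSpace

theorem quasar_minimizers_star_convex {n : ℕ}
    (f : EuclideanSpace ℝ (Fin n) → ℝ) (hdiff : Differentiable ℝ f)
    (γ : ℝ) (hγ : γ ∈ Set.Ioc (0:ℝ) 1)
    (xstar : EuclideanSpace ℝ (Fin n)) (hmin : ∀ x, f xstar ≤ f x)
    (hquasar : ∀ x, f xstar ≥ f x + (1/γ) * ⟪gradient f x, xstar - x⟫) :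
    ∀ y, (∀ x, f y ≤ f x) → ∀ t ∈ Set.Icc (0:ℝ) 1,
      ∀ x, f (t • xstar + (1 - t) • y) ≤ f x := by
  intro y hy t ht x
  set L : ℝ → EuclideanSpace ℝ (Fin n) := fun s => y + s • (xstar - y) with hL
  have hLz : ∀ s : ℝ, L s = s • xstar + (1 - s) • y := by
    intro s
    simp only [hL]
    module
  set φ : ℝ → ℝ := fun s => f (L s) with hφ
  -- derivative of φ
  have hderiv : ∀ s : ℝ, HasDerivAt φ ⟪gradient f (L s), xstar - y⟫ s := by
    intro s
    have hLd : HasDerivAt L (xstar - y) s := by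
      have : HasDerivAt (fun s : ℝ => s • (xstar - y)) (xstar - y) s := by
        simpa using (hasDerivAt_id s).smul_const (xstar - y)
      simpa [hL] using this.const_add y
    have hfd : HasFDerivAt f
        (InnerProductSpace.toDual ℝ _ (gradient f (L s))) (L s) :=
      ((hdiff (L s)).hasGradientAt).hasFDerivAt
    have := hfd.comp_hasDerivAt s hLd
    have h2 : HasDerivAt φ ((InnerProductSpace.toDual ℝ _ (gradient f (L s))) (xstar - y)) s := this
    simpa using h2
  have hcont : Continuous φ := by
    have : Differentiable ℝ φ := fun s => (hderiv s).differentiableAt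
    exact this.continuous
  -- φ is antitone on [0,1]
  have hanti : AntitoneOn φ (Set.Icc (0:ℝ) 1) := by
    apply antitoneOn_of_deriv_nonpos (convex_Icc 0 1) hcont.continuousOn
    · intro s hs
      exact ((hderiv s).differentiableAt).differentiableWithinAt
    · intro s hs
      rw [interior_Icc] at hs
      rw [(hderiv s).deriv]
      have hq := hquasar (L s)
      have hfs : f xstar ≤ f (L s) := hmin _
      have h1 : (1/γ) * ⟪gradient f (L s), xstar - L s⟫ ≤ 0 := by linarith
      have h2 : ⟪gradient f (L s), xstar - L s⟫ ≤ 0 := by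
        have hγpos : (0:ℝ) < 1/γ := one_div_pos.mpr hγ.1
        nlinarith
      have h3 : xstar - L s = (1 - s) • (xstar - y) := by
        simp only [hL]; module
      rw [h3, real_inner_smul_right] at h2
      have h1s : 0 < 1 - s := by linarith [hs.2]
      nlinarith
  have h0 : f (L t) ≤ f (L 0) := hanti (by constructor <;> norm_num) ht ht.1
  rw [hLz] at h0
  have hL0 : L 0 = y := by simp [hL]
  rw [hL0] at h0
  exact le_trans h0 (hy x)
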